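/- (Gabber's lemma, abstract form) Let A : ℤ^m → ℤ^k be a homomorphism given by an integer matrix in which every column has Euclidean norm at most c. Then the torsion subgroup of the cokernel ℤ^k / im(A) has cardinality at most c^m (when c ≥ 1). -/

import Mathlib

open Finset Matrix in
lemma hadamard_cols_aux {n : ℕ} (M : Matrix (Fin (n+1)) (Fin (n+1)) ℝ) :
    |M.det| ≤ ∏ j, Real.sqrt (∑ i, (M i j) ^ 2) := by
  classical
  letI : WellFoundedLT (Fin (n+1)) := Finite.to_wellFoundedLT
  let v : Fin (n+1) → EuclideanSpace ℝ (Fin (n+1)) := fun j => WithLp.toLp 2 (fun i => M i j : Fin (n+1) → ℝ)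
  let g : Fin (n+1) → EuclideanSpace ℝ (Fin (n+1)) := InnerProductSpace.gramSchmidt ℝ v
  have hortho : ∀ i j, i ≠ j → (inner ℝ (g i) (g j) : ℝ) = 0 := fun i j h =>
    InnerProductSpace.gramSchmidt_orthogonal ℝ v h
  let c : Fin (n+1) → Fin (n+1) → ℝ := fun i j => (inner ℝ (g i) (v j) : ℝ) / (‖g i‖ : ℝ) ^ 2
  have hvg : ∀ j, v j = g j + ∑ i ∈ Iio j, c i j • g i := by
    intro j
    simpa using InnerProductSpace.gramSchmidt_def'' ℝ v j
  let U : Matrix (Fin (n+1)) (Fin (n+1)) ℝ := fun i j => if i = j then 1 else if i < j then c i j else 0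
  let G : Matrix (Fin (n+1)) (Fin (n+1)) ℝ := Matrix.of fun i j => g j i
  have key : ∀ j, ∑ l, U l j • g l = v j := by
    intro j
    have h1 : ∀ l, U l j • g l = if l = j then g j else if l < j then c l j • g l else 0 := by
      intro l
      by_cases h : l = j
      · subst h; simp [U]
      · by_cases h' : l < j <;> simp [U, h, h']
    rw [Finset.sum_congr rfl fun l _ => h1 l]
    rw [← Finset.sum_subset (Finset.subset_univ (Iic j))]
    · rw [← Finset.Iio_insert, Finset.sum_insert (by simp)]
      rw [if_pos rfl, Finset.sum_congr rfl fun l hl => ?_]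
      · exact (hvg j).symm
      · rw [Finset.mem_Iio] at hl
        simp [hl.ne, hl]
    · intro x _ hx
      rw [Finset.mem_Iic, not_le] at hx
      simp [hx.ne', not_lt_of_gt hx]
  have hMU : M = G * U := by
    ext i j
    calc M i j = v j i := rfl
      _ = (∑ x, U x j • g x) i := congrArg (fun w => w i) (key j).symm
      _ = ∑ x, U x j * g x i := by rw [WithLp.ofLp_sum, Finset.sum_apply]; rfl
      _ = ∑ x, g x i * U x j := by simp [mul_comm]
      _ = (G * U) i j := by simp [Matrix.mul_apply, G]
  have hdetU : U.det = 1 := by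
    have ht : U.BlockTriangular id := by
      intro i j hji
      simp only [id] at hji
      simp [U, (ne_of_gt hji), not_lt_of_gt hji]
    rw [Matrix.det_of_upperTriangular ht]
    simp [U]
  have hdetM : M.det = G.det := by rw [hMU, Matrix.det_mul, hdetU, mul_one]
  have hGram : Gᵀ * G = Matrix.diagonal fun j => ‖g j‖ ^ 2 := by
    ext i j
    by_cases h : i = j
    · subst h
      simp only [Matrix.mul_apply, Matrix.transpose_apply, Matrix.diagonal_apply_eq]
      rw [← real_inner_self_eq_norm_sq]
      simp [G, PiLp.inner_apply, RCLike.inner_apply, mul_comm]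
      rw [EuclideanSpace.norm_eq, Real.sq_sqrt (by positivity)]
      simp only [Real.norm_eq_abs, sq_abs]
      simp only [sq]
    · simp only [Matrix.mul_apply, Matrix.transpose_apply, Matrix.diagonal_apply_ne _ h]
      have := hortho i j h
      simp only [PiLp.inner_apply, RCLike.inner_apply, conj_trivial] at this
      simpa [G, mul_comm] using this
  have hdetG2 : G.det ^ 2 = ∏ j, ‖g j‖ ^ 2 := by
    have := congrArg Matrix.det hGram
    rwa [Matrix.det_mul, Matrix.det_transpose, ← sq, Matrix.det_diagonal] at this
  have habs : |M.det| = ∏ j, ‖g j‖ := by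
    rw [hdetM, ← Real.sqrt_sq_eq_abs, hdetG2, Finset.prod_pow,
      Real.sqrt_sq (Finset.prod_nonneg fun j _ => norm_nonneg _)]
  rw [habs]
  refine Finset.prod_le_prod (fun j _ => norm_nonneg _) fun j _ => ?_
  have hle : ‖g j‖ ≤ ‖v j‖ := by
    have hw : (inner ℝ (g j) (∑ i ∈ Iio j, c i j • g i) : ℝ) = 0 := by
      rw [inner_sum]
      refine Finset.sum_eq_zero fun i hi => ?_
      rw [Finset.mem_Iio] at hi
      rw [real_inner_smul_right, hortho j i hi.ne', mul_zero]
    have h2 : ‖v j‖ ^ 2 = ‖g j‖ ^ 2 + ‖∑ i ∈ Iio j, c i j • g i‖ ^ 2 := by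
      rw [hvg j, norm_add_sq_real, hw]
      ring
    nlinarith [norm_nonneg (v j), norm_nonneg (g j), sq_nonneg (‖∑ i ∈ Iio j, c i j • g i‖)]
  refine hle.trans (le_of_eq ?_)
  rw [EuclideanSpace.norm_eq]
  congr 1
  exact Finset.sum_congr rfl fun i _ => by rw [Real.norm_eq_abs, sq_abs]

lemma hadamard_cols {n : ℕ} (M : Matrix (Fin n) (Fin n) ℝ) :
    |M.det| ≤ ∏ j, Real.sqrt (∑ i, (M i j) ^ 2) := by
  cases n with
  | zero => simp [Matrix.det_fin_zero]
  | succ n => exact hadamard_cols_aux M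


open Matrix in
lemma mulVecLin_injective_int {n : ℕ} (B : Matrix (Fin n) (Fin n) ℤ) (hB : B.det ≠ 0) :
    Function.Injective B.mulVecLin := by
  rw [injective_iff_map_eq_zero]
  intro x hx
  have h1 : B.adjugate *ᵥ (B *ᵥ x) = B.det • x := by
    rw [Matrix.mulVec_mulVec, Matrix.adjugate_mul, Matrix.smul_mulVec, Matrix.one_mulVec]
  rw [show B *ᵥ x = 0 from hx, Matrix.mulVec_zero] at h1
  funext i
  have := congrFun h1.symm i
  simpa [hB] using this

open Matrix in
lemma card_quot_range_mulVecLin {n : ℕ} (B : Matrix (Fin n) (Fin n) ℤ) (hB : B.det ≠ 0) :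
    Nat.card ((Fin n → ℤ) ⧸ LinearMap.range B.mulVecLin) = B.det.natAbs := by
  classical
  set N := LinearMap.range B.mulVecLin with hN
  have hinj := mulVecLin_injective_int B hB
  let b0 : Module.Basis (Fin n) ℤ (Fin n → ℤ) := Pi.basisFun ℤ (Fin n)
  let e1 : (Fin n → ℤ) ≃ₗ[ℤ] N := LinearEquiv.ofInjective B.mulVecLin hinj
  obtain ⟨n', snf⟩ := N.smithNormalForm b0
  have hn' : n = n' := by
    have h1 : Module.finrank ℤ N = n' := Module.finrank_eq_card_basis snf.bN |>.trans (by simp)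
    have h2 : Module.finrank ℤ N = n := by
      rw [← LinearEquiv.finrank_eq e1]
      simp [Module.finrank_fin_fun]
    rw [← h2, h1]
  subst hn'
  have hidx : N.toAddSubgroup.index = ∏ i, (snf.a i).natAbs := by
    rw [snf.toAddSubgroup_index_eq_pow_mul_prod]
    simp only [Fintype.card_fin, Nat.sub_self, pow_zero, one_mul]
    refine Finset.prod_congr rfl fun i _ => ?_
    rw [Ideal.span_singleton_toAddSubgroup_eq_zmultiples, Int.index_zmultiples]
  let e2 : (Fin n → ℤ) ≃ₗ[ℤ] N := b0.equiv snf.bN (Equiv.refl _)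
  have hassoc : Associated (LinearMap.det (N.subtype ∘ₗ (e1 : (Fin n → ℤ) →ₗ[ℤ] N)))
      (LinearMap.det (N.subtype ∘ₗ (e2 : (Fin n → ℤ) →ₗ[ℤ] N))) :=
    LinearMap.associated_det_comp_equiv _ _ _
  have hd1 : LinearMap.det (N.subtype ∘ₗ (e1 : (Fin n → ℤ) →ₗ[ℤ] N)) = B.det := by
    have : N.subtype ∘ₗ (e1 : (Fin n → ℤ) →ₗ[ℤ] N) = B.mulVecLin := by
      ext x
      rfl
    rw [this, ← Matrix.toLin'_apply', LinearMap.det_toLin']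
  let fE : Equiv.Perm (Fin n) :=
    Equiv.ofBijective snf.f (Finite.injective_iff_bijective.mp snf.f.injective)
  have hfE : ∀ x, fE x = snf.f x := fun _ => rfl
  have hd2 : (LinearMap.det (N.subtype ∘ₗ (e2 : (Fin n → ℤ) →ₗ[ℤ] N))).natAbs
      = ∏ i, (snf.a i).natAbs := by
    rw [← LinearMap.det_toMatrix b0]
    have hdecomp : LinearMap.toMatrix b0 b0 (N.subtype ∘ₗ (e2 : (Fin n → ℤ) →ₗ[ℤ] N))
        = (b0.toMatrix ⇑snf.bM) * ((Equiv.Perm.permMatrix ℤ fE.symm) * Matrix.diagonal snf.a) := by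
      ext i j
      rw [LinearMap.toMatrix_apply]
      have h1 : (N.subtype ∘ₗ (e2 : (Fin n → ℤ) →ₗ[ℤ] N)) (b0 j) = (snf.bN j : Fin n → ℤ) := by
        simp [e2, Module.Basis.equiv_apply]
      rw [h1, snf.snf j]
      have hrepr : b0.repr (snf.a j • snf.bM (snf.f j)) i = snf.a j * (snf.bM (snf.f j)) i := by
        simp [b0]
      rw [hrepr, Matrix.mul_apply]
      have h2 : ∀ l, (b0.toMatrix ⇑snf.bM) i l * ((Equiv.Perm.permMatrix ℤ fE.symm) * Matrix.diagonal snf.a) l j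
          = (b0.toMatrix ⇑snf.bM) i l * (if fE.symm l = j then snf.a j else 0) := by
        intro l
        rw [Matrix.mul_diagonal]
        congr 1
        by_cases h : fE.symm l = j
        · simp [Equiv.Perm.permMatrix, PEquiv.toMatrix_apply, Equiv.toPEquiv, h]
        · simp [Equiv.Perm.permMatrix, PEquiv.toMatrix_apply, Equiv.toPEquiv, h]
      rw [Finset.sum_congr rfl fun l _ => h2 l]
      rw [Finset.sum_eq_single (fE j)]
      · rw [if_pos (fE.symm_apply_apply j), hfE, Module.Basis.toMatrix_apply, mul_comm]
        simp [b0]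
      · intro l _ hl
        rw [if_neg, mul_zero]
        intro hc
        exact hl (by rw [← hc, Equiv.apply_symm_apply])
      · intro h
        exact absurd (Finset.mem_univ _) h
    rw [hdecomp, Matrix.det_mul, Matrix.det_mul, Matrix.det_diagonal, Matrix.det_permutation]
    have hQ : (b0.toMatrix ⇑snf.bM).det.natAbs = 1 := by
      have h1 : (b0.toMatrix ⇑snf.bM).det * (snf.bM.toMatrix ⇑b0).det = 1 := by
        rw [← Matrix.det_mul, Module.Basis.toMatrix_mul_toMatrix_flip, Matrix.det_one]
      have h2 : IsUnit (b0.toMatrix ⇑snf.bM).det := IsUnit.of_mul_eq_one _ h1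
      rcases Int.isUnit_iff.mp h2 with h | h <;> simp [h]
    simp [Int.natAbs_mul, hQ, Int.units_natAbs]
    exact (map_prod Int.natAbsHom snf.a Finset.univ)
  have hcard : Nat.card ((Fin n → ℤ) ⧸ N) = N.toAddSubgroup.index := rfl
  rw [hcard, hidx, ← hd2, ← Int.natAbs_eq_iff_associated.mpr hassoc, hd1]

open Matrix Submodule

/-- **Gabber's lemma, abstract form.** Let `A : ℤ^m → ℤ^k` be given by an integer
matrix each of whose columns has Euclidean norm at most `c`, with `c ≥ 1`. Then the torsion
subgroup of the cokernel `ℤ^k / im(A)` has cardinality at most `c^m`. -/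
theorem stmt9 (k m : ℕ) (A : Matrix (Fin k) (Fin m) ℤ) (c : ℝ) (hc : 1 ≤ c)
    (hcol : ∀ j : Fin m, Real.sqrt (∑ i : Fin k, ((A i j : ℝ)) ^ 2) ≤ c) :
    (Nat.card
        (Submodule.torsion ℤ ((Fin k → ℤ) ⧸ LinearMap.range (Matrix.mulVecLin A))) : ℝ)
      ≤ c ^ m := by
  classical
  set L := LinearMap.range (Matrix.mulVecLin A) with hL
  set v : Fin m → (Fin k → ℚ) := fun j => fun i => (A i j : ℚ) with hv
  obtain ⟨bs, hbs_sub, hbs_span, hbs_li⟩ := exists_linearIndependent ℚ (Set.range v)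
  haveI : Fintype bs := ((Set.finite_range v).subset hbs_sub).fintype
  set n := Fintype.card bs with hn
  let eb : bs ≃ Fin n := Fintype.equivFin bs
  have hσex : ∀ x : bs, ∃ j, v j = (x : Fin k → ℚ) := fun x => hbs_sub x.2
  let σ : Fin n → Fin m := fun i => (hσex (eb.symm i)).choose
  have hvσ : ∀ i, v (σ i) = ((eb.symm i : bs) : Fin k → ℚ) := fun i => (hσex (eb.symm i)).choose_spec
  have hσinj : Function.Injective σ := by
    intro i i' h
    have h1 := hvσ i
    rw [h, hvσ i'] at h1
    exact ((Equiv.injective eb.symm) (Subtype.ext h1)).symm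
  have hnm : n ≤ m := by simpa using Fintype.card_le_of_injective σ hσinj
  have hli : LinearIndependent ℚ (fun i => v (σ i)) := by
    have h1 : (fun i => v (σ i)) = (fun x : bs => (x : Fin k → ℚ)) ∘ eb.symm := funext hvσ
    rw [h1]
    exact hbs_li.comp eb.symm eb.symm.injective
  have hre : Set.range (fun i => v (σ i)) = bs := by
    ext x
    constructor
    · rintro ⟨i, rfl⟩
      show v (σ i) ∈ bs
      rw [hvσ i]
      exact (eb.symm i).2
    · intro hx
      refine ⟨eb ⟨x, hx⟩, ?_⟩
      show v (σ (eb ⟨x, hx⟩)) = x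
      rw [hvσ]
      simp
  have hspanσ : Submodule.span ℚ (Set.range (fun i => v (σ i))) = Submodule.span ℚ (Set.range v) := by
    rw [hre]
    exact hbs_span
  set M : Matrix (Fin k) (Fin n) ℚ := Matrix.of (fun i r => v (σ r) i) with hM
  have hMt : ∀ r, Mᵀ r = v (σ r) := fun r => rfl
  have hMinj : Function.Injective M.mulVec := by
    rw [Matrix.mulVec_injective_iff]
    exact hli
  have hrankM : M.rank = n := by
    have h1 : LinearMap.range M.mulVecLin ≃ₗ[ℚ] (Fin n → ℚ) :=
      (LinearEquiv.ofInjective M.mulVecLin hMinj).symm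
    rw [Matrix.rank, LinearEquiv.finrank_eq h1]
    simp
  have hrowtop : Submodule.span ℚ (Set.range (fun i : Fin k => (fun r => M i r))) = ⊤ := by
    have h2 : LinearMap.range Mᵀ.mulVecLin = Submodule.span ℚ (Set.range Mᵀᵀ) :=
      Matrix.range_mulVecLin Mᵀ
    have h1 : LinearMap.range Mᵀ.mulVecLin = ⊤ := by
      apply Submodule.eq_top_of_finrank_eq
      have h3 : (Mᵀ).rank = n := by rw [Matrix.rank_transpose, hrankM]
      rw [show Module.finrank ℚ (LinearMap.range Mᵀ.mulVecLin) = Mᵀ.rank from rfl, h3]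
      simp
    rw [h1] at h2
    have h4 : Set.range Mᵀᵀ = Set.range (fun i : Fin k => (fun r => M i r)) := rfl
    rw [← h4]
    exact h2.symm
  obtain ⟨bt, hbt_sub, hbt_span, hbt_li⟩ :=
    exists_linearIndependent ℚ (Set.range (fun i : Fin k => (fun r => M i r)))
  rw [hrowtop] at hbt_span
  haveI : Fintype bt := ((Set.finite_range _).subset hbt_sub).fintype
  let bT : Module.Basis bt ℚ (Fin n → ℚ) := Module.Basis.mk hbt_li (by rw [Subtype.range_coe, hbt_span])
  have hcardbt : Fintype.card bt = n := by
    have h1 := Module.finrank_eq_card_basis bT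
    simp only [Module.finrank_fin_fun] at h1
    omega
  let et : bt ≃ Fin n := Fintype.equivFinOfCardEq hcardbt
  have htex : ∀ x : bt, ∃ i : Fin k, (fun r => M i r) = (x : Fin n → ℚ) := fun x => hbt_sub x.2
  let t : Fin n → Fin k := fun r => (htex (et.symm r)).choose
  have hwt : ∀ r, (fun i => M (t r) i) = ((et.symm r : bt) : Fin n → ℚ) :=
    fun r => (htex (et.symm r)).choose_spec
  have htinj : Function.Injective t := by
    intro r r' h
    have h1 := hwt r
    rw [h, hwt r'] at h1
    exact ((Equiv.injective et.symm) (Subtype.ext h1)).symm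
  set B : Matrix (Fin n) (Fin n) ℤ := Matrix.of (fun r i => A (t r) (σ i)) with hB
  set Bq : Matrix (Fin n) (Fin n) ℚ := Matrix.of (fun r i => (A (t r) (σ i) : ℚ)) with hBq
  have hBqrow : ∀ r, Bq r = ((et.symm r : bt) : Fin n → ℚ) := by
    intro r
    rw [← hwt r]
    rfl
  have hBqdet : Bq.det ≠ 0 := by
    have hrows : LinearIndependent ℚ (fun r => Bq r) := by
      have h1 : (fun r => Bq r) = (fun x : bt => (x : Fin n → ℚ)) ∘ et.symm := funext hBqrow
      rw [h1]
      exact hbt_li.comp et.symm et.symm.injective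
    have h2 : Function.Injective (Bqᵀ).mulVec := by
      rw [Matrix.mulVec_injective_iff]
      exact hrows
    have hunit : IsUnit Bqᵀ := Matrix.mulVec_injective_iff_isUnit.mp h2
    have h3 := Matrix.isUnit_iff_isUnit_det _ |>.mp hunit
    rw [Matrix.det_transpose] at h3
    exact h3.ne_zero
  have hBdet : B.det ≠ 0 := by
    intro h
    apply hBqdet
    have h1 : Bq = (Int.castRingHom ℚ).mapMatrix B := by
      ext r i; simp [hBq, hB]
    rw [h1, ← RingHom.map_det, h]
    simp
  let π : (Fin k → ℤ) →ₗ[ℤ] (Fin n → ℤ) := LinearMap.funLeft ℤ ℤ t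
  have hπle : L ≤ (L.map π).comap π := fun x hx => Submodule.mem_comap.mpr (Submodule.mem_map_of_mem hx)
  let ψ : ((Fin k → ℤ) ⧸ L) →ₗ[ℤ] ((Fin n → ℤ) ⧸ L.map π) := Submodule.mapQ L (L.map π) π hπle
  have hcast_mem : ∀ y ∈ L, (fun i => (y i : ℚ)) ∈ Submodule.span ℚ (Set.range v) := by
    rintro y ⟨x, rfl⟩
    rw [mem_span_range_iff_exists_fun]
    refine ⟨fun j => (x j : ℚ), ?_⟩
    funext i
    rw [Finset.sum_apply]
    simp only [Matrix.mulVecLin_apply, Matrix.mulVec, dotProduct, Pi.smul_apply,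
      smul_eq_mul]
    push_cast
    exact Finset.sum_congr rfl fun j _ => mul_comm _ _
  have hker : ∀ z : (Fin k → ℤ) ⧸ L, z ∈ Submodule.torsion ℤ ((Fin k → ℤ) ⧸ L) → ψ z = 0 → z = 0 := by
    intro z hz hψ
    obtain ⟨w0, rfl⟩ := Submodule.Quotient.mk_surjective L z
    obtain ⟨a, ha⟩ := (Submodule.mem_torsion_iff _).mp hz
    have haw : (a : ℤ) • w0 ∈ L := by
      rwa [← Submodule.Quotient.mk_smul, Submodule.Quotient.mk_eq_zero] at ha
    have hπw : π w0 ∈ L.map π := by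
      rw [Submodule.mapQ_apply, Submodule.Quotient.mk_eq_zero] at hψ
      exact hψ
    obtain ⟨u, hu, huw⟩ := hπw
    set d := w0 - u with hd
    have had : (a : ℤ) • d ∈ L := by
      rw [hd, smul_sub]
      exact Submodule.sub_mem L haw (Submodule.smul_mem L _ hu)
    have hπd : π d = 0 := by
      rw [hd]
      simp only [map_sub, huw, sub_self]
    have hdq : (fun i => (d i : ℚ)) ∈ Submodule.span ℚ (Set.range v) := by
      have h1 := hcast_mem _ had
      have h2 : (fun i => (((a : ℤ) • d) i : ℚ)) = ((a : ℤ) : ℚ) • (fun i => (d i : ℚ)) := by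
        funext i
        simp only [Pi.smul_apply, smul_eq_mul]
        push_cast
        ring
      rw [h2] at h1
      have ha0 : ((a : ℤ) : ℚ) ≠ 0 := by
        exact_mod_cast nonZeroDivisors.coe_ne_zero a
      have h3 := Submodule.smul_mem (Submodule.span ℚ (Set.range v)) (((a : ℤ) : ℚ))⁻¹ h1
      rwa [inv_smul_smul₀ ha0] at h3
    rw [← hspanσ, mem_span_range_iff_exists_fun] at hdq
    obtain ⟨q, hq⟩ := hdq
    have hqz : Bq.mulVec q = 0 := by
      funext r
      show Bq.mulVec q r = (0 : ℚ)
      have h1 := congrFun hq (t r)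
      rw [Finset.sum_apply] at h1
      have h2 : π d r = 0 := congrFun hπd r
      have h2' : d (t r) = 0 := h2
      have h3 : ((d (t r) : ℚ)) = 0 := by rw [h2']; simp
      rw [h3] at h1
      rw [← h1, Matrix.mulVec, dotProduct]
      refine Finset.sum_congr rfl fun i _ => ?_
      show Bq r i * q i = (q i • v (σ i)) (t r)
      rw [Pi.smul_apply, smul_eq_mul, mul_comm]
      rfl
    have hq0 : q = 0 := by
      have hunit : IsUnit Bq := (Matrix.isUnit_iff_isUnit_det _).mpr (isUnit_iff_ne_zero.mpr hBqdet)
      exact Matrix.mulVec_injective_iff_isUnit.mpr hunit (by rw [hqz, Matrix.mulVec_zero])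
    have hd0 : d = 0 := by
      funext i
      have h1 := congrFun hq i
      rw [hq0] at h1
      rw [Finset.sum_apply] at h1
      have h2 : ((d i : ℚ)) = 0 := by
        rw [← h1]
        refine Finset.sum_eq_zero fun j _ => ?_
        show ((0 : Fin n → ℚ) j • v (σ j)) i = 0
        simp
      exact_mod_cast h2
    rw [Submodule.Quotient.mk_eq_zero]
    rw [show w0 = u from by rw [← sub_eq_zero]; exact hd0]
    exact hu
  have hBle : LinearMap.range B.mulVecLin ≤ L.map π := by
    rintro y ⟨x, rfl⟩
    refine ⟨A.mulVecLin (fun j => ∑ i, if σ i = j then x i else 0), LinearMap.mem_range_self _ _, ?_⟩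
    funext r
    show (A.mulVecLin (fun j => ∑ i, if σ i = j then x i else 0)) (t r) = (B.mulVecLin x) r
    simp only [Matrix.mulVecLin_apply, Matrix.mulVec, dotProduct]
    have hL1 : ∀ j, A (t r) j * (∑ i, if σ i = j then x i else 0)
        = ∑ i, if σ i = j then A (t r) j * x i else 0 := by
      intro j
      rw [Finset.mul_sum]
      exact Finset.sum_congr rfl fun i _ => by rw [mul_ite, mul_zero]
    rw [Finset.sum_congr rfl fun j _ => hL1 j, Finset.sum_comm]
    refine Finset.sum_congr rfl fun i _ => ?_
    rw [Finset.sum_ite_eq Finset.univ (σ i) (fun j => A (t r) j * x i),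
      if_pos (Finset.mem_univ _)]
    rfl
  let φ : ((Fin n → ℤ) ⧸ LinearMap.range B.mulVecLin) →ₗ[ℤ] ((Fin n → ℤ) ⧸ L.map π) :=
    Submodule.mapQ _ _ LinearMap.id (fun x hx => hBle hx)
  have hφsurj : Function.Surjective φ := by
    intro y
    obtain ⟨y0, rfl⟩ := Submodule.Quotient.mk_surjective _ y
    exact ⟨Submodule.Quotient.mk y0, by rw [Submodule.mapQ_apply]; rfl⟩
  have hcard1 : Nat.card ((Fin n → ℤ) ⧸ LinearMap.range B.mulVecLin) = B.det.natAbs :=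
    card_quot_range_mulVecLin B hBdet
  haveI hfin1 : Finite ((Fin n → ℤ) ⧸ LinearMap.range B.mulVecLin) :=
    Nat.finite_of_card_ne_zero (by rw [hcard1]; exact Int.natAbs_ne_zero.mpr hBdet)
  haveI hfin2 : Finite ((Fin n → ℤ) ⧸ L.map π) := Finite.of_surjective φ hφsurj
  let χ : Submodule.torsion ℤ ((Fin k → ℤ) ⧸ L) → ((Fin n → ℤ) ⧸ L.map π) :=
    fun x => ψ (x : (Fin k → ℤ) ⧸ L)
  have hχinj : Function.Injective χ := by
    intro x y hxy
    have hsub : ((x : (Fin k → ℤ) ⧸ L) - (y : (Fin k → ℤ) ⧸ L)) ∈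
        Submodule.torsion ℤ ((Fin k → ℤ) ⧸ L) := Submodule.sub_mem _ x.2 y.2
    have h1 : ψ ((x : (Fin k → ℤ) ⧸ L) - (y : (Fin k → ℤ) ⧸ L)) = 0 := by
      rw [map_sub, sub_eq_zero]
      exact hxy
    have h2 := hker _ hsub h1
    exact Subtype.ext (by rwa [sub_eq_zero] at h2)
  have hcardle : Nat.card (Submodule.torsion ℤ ((Fin k → ℤ) ⧸ L)) ≤ B.det.natAbs := by
    calc Nat.card (Submodule.torsion ℤ ((Fin k → ℤ) ⧸ L))
        ≤ Nat.card ((Fin n → ℤ) ⧸ L.map π) := Nat.card_le_card_of_injective χ hχinj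
      _ ≤ Nat.card ((Fin n → ℤ) ⧸ LinearMap.range B.mulVecLin) :=
          Nat.card_le_card_of_surjective φ hφsurj
      _ = B.det.natAbs := hcard1
  have hreal : (B.det.natAbs : ℝ) ≤ c ^ n := by
    have hmap : ((Int.castRingHom ℝ).mapMatrix B).det = ((B.det : ℤ) : ℝ) :=
      (RingHom.map_det _ _).symm
    have hhad := hadamard_cols ((Int.castRingHom ℝ).mapMatrix B)
    rw [hmap] at hhad
    have heq : (B.det.natAbs : ℝ) = |((B.det : ℤ) : ℝ)| := by
      simp [Nat.cast_natAbs, Int.cast_abs]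
    rw [heq]
    refine hhad.trans ?_
    have hfac : ∀ i : Fin n, Real.sqrt (∑ r, (((Int.castRingHom ℝ).mapMatrix B) r i) ^ 2) ≤ c := by
      intro i
      have h1 : ∑ r : Fin n, (((Int.castRingHom ℝ).mapMatrix B) r i) ^ 2
          = ∑ j ∈ Finset.univ.image t, ((A j (σ i) : ℝ)) ^ 2 := by
        rw [Finset.sum_image (fun a _ b _ h => htinj h)]
        rfl
      have h2 : ∑ j ∈ Finset.univ.image t, ((A j (σ i) : ℝ)) ^ 2
          ≤ ∑ j : Fin k, ((A j (σ i) : ℝ)) ^ 2 :=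
        Finset.sum_le_sum_of_subset_of_nonneg (Finset.subset_univ _) (fun j _ _ => sq_nonneg _)
      refine le_trans (Real.sqrt_le_sqrt (by rw [h1]; exact h2)) (hcol (σ i))
    calc ∏ i, Real.sqrt (∑ r, (((Int.castRingHom ℝ).mapMatrix B) r i) ^ 2)
        ≤ ∏ _i : Fin n, c :=
          Finset.prod_le_prod (fun _ _ => Real.sqrt_nonneg _) (fun i _ => hfac i)
      _ = c ^ n := by rw [Finset.prod_const]; simp
  calc (Nat.card (Submodule.torsion ℤ ((Fin k → ℤ) ⧸ L)) : ℝ)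
      ≤ (B.det.natAbs : ℝ) := by exact_mod_cast hcardle
    _ ≤ c ^ n := hreal
    _ ≤ c ^ m := pow_le_pow_right₀ hc hnm
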